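/- arXiv:2312.06938 — 2 statements merged into one kernel-verified Lean document; each statement's English description precedes it below -/
import Mathlib

section
/- Let f₀ : ℝ³ → ℝ be defined by f₀(x,y,z) := z⁵ + y⁷x + x¹⁵ and let A := f₀⁻¹(0). Then A is the graph of the continuous function g : ℝ² → ℝ, g(x,y) := −(y⁷x + x¹⁵)^{1/5} (real fifth root), i.e. A = {(x,y,g(x,y)) : (x,y) ∈ ℝ²}; the function g satisfies the flat condition at 0 ∈ ℝ²; and consequently LD_0(A) = ℝ² × {0} ⊆ ℝ³. -/
open Filter Topology Set Asymptotics

variable {E : Type*} [NormedAddCommGroup E] [NormedSpace ℝ E]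

/-- The direction set `D_p(A)`. -/
def dirSet (A : Set E) (p : E) : Set E :=
  {a | ‖a‖ = 1 ∧ ∃ x : ℕ → E, (∀ i, x i ∈ A ∧ x i ≠ p) ∧
    Tendsto x atTop (𝓝 p) ∧
    Tendsto (fun i => ‖x i - p‖⁻¹ • (x i - p)) atTop (𝓝 a)}

/-- The real tangent cone `LD_p(A)`. -/
def LDir (A : Set E) (p : E) : Set E :=
  {w | ∃ a ∈ dirSet A p, ∃ t : ℝ, 0 ≤ t ∧ w = t • a}

/-- Condition (SSP) at `p`. -/
def SSP (A : Set E) (p : E) : Prop :=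
  ∀ a : ℕ → E, (∀ m, a m ≠ p) → Tendsto a atTop (𝓝 p) →
    (∃ d ∈ dirSet A p, Tendsto (fun m => ‖a m - p‖⁻¹ • (a m - p)) atTop (𝓝 d)) →
    ∃ b : ℕ → E, (∀ m, b m ∈ A) ∧
      Tendsto (fun m => ‖a m - b m‖ / ‖a m - p‖) atTop (𝓝 0) ∧
      Tendsto (fun m => ‖a m - b m‖ / ‖b m - p‖) atTop (𝓝 0)

/-- The geometric directional bundle fiber `𝒢D_p(A)`. -/
def GDir (A : Set E) (p : E) : Set E :=
  {a | ‖a‖ = 1 ∧ ∃ q : ℕ → E, (∀ m, q m ∈ A) ∧ Tendsto q atTop (𝓝 p) ∧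
    ∃ u : ℕ → E, (∀ m, u m ∈ dirSet A (q m)) ∧ Tendsto u atTop (𝓝 a)}

/-- The cone `L𝒢D_p(A)` over the geometric directional bundle fiber. -/
def LGDir (A : Set E) (p : E) : Set E :=
  {w | ∃ a ∈ GDir A p, ∃ t : ℝ, 0 ≤ t ∧ w = t • a}

/-- A bi-Lipschitz homeomorphism of `E`: a bijection which is Lipschitz with
Lipschitz inverse (equivalently, antilipschitz). -/
def IsBiLipschitz (h : E → E) : Prop :=
  Function.Bijective h ∧ ∃ K K' : NNReal, LipschitzWith K h ∧ AntilipschitzWith K' h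

/-- The real fifth root of a real number. -/
noncomputable def fifthRoot (t : ℝ) : ℝ :=
  if 0 ≤ t then t ^ ((1 : ℝ) / 5) else -((-t) ^ ((1 : ℝ) / 5))

/-- `g(x,y) = -(y⁷x + x¹⁵)^{1/5}`. -/
noncomputable def gBS (x y : ℝ) : ℝ := -fifthRoot (y ^ 7 * x + x ^ 15)

lemma fifthRoot_pow (t : ℝ) : fifthRoot t ^ 5 = t := by
  unfold fifthRoot
  split_ifs with h
  · rw [← Real.rpow_natCast (t ^ ((1:ℝ)/5)) 5, ← Real.rpow_mul h]; norm_num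
  · push_neg at h
    have h' : (0:ℝ) ≤ -t := by linarith
    rw [neg_pow, ← Real.rpow_natCast ((-t) ^ ((1:ℝ)/5)) 5, ← Real.rpow_mul h']
    norm_num

lemma pow5_inj : Function.Injective fun a : ℝ => a ^ 5 :=
  (Odd.strictMono_pow (by decide)).injective

lemma fifthRoot_pow' (s : ℝ) : fifthRoot (s ^ 5) = s := pow5_inj (fifthRoot_pow (s ^ 5))

lemma continuous_fifthRoot : Continuous fifthRoot := by
  have h1 : Continuous fun t : ℝ => t ^ ((1:ℝ)/5) := by
    rw [continuous_iff_continuousAt]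
    exact fun x => Real.continuousAt_rpow_const x _ (Or.inr (by norm_num))
  have h2 : Continuous fun t : ℝ => -((-t) ^ ((1:ℝ)/5)) := (h1.comp continuous_neg).neg
  exact Continuous.if_le h1 h2 continuous_const continuous_id
    (fun x hx => by subst hx; norm_num [Real.zero_rpow])

lemma abs_fifthRoot (t : ℝ) : |fifthRoot t| = |t| ^ ((1:ℝ)/5) := by
  unfold fifthRoot
  split_ifs with h
  · rw [abs_of_nonneg h, abs_of_nonneg (Real.rpow_nonneg h _)]
  · push_neg at h
    rw [abs_of_neg h, abs_neg, abs_of_nonneg (Real.rpow_nonneg (by linarith) _)]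

lemma graph_key (z w : ℝ) : z ^ 5 + w = 0 ↔ z = -fifthRoot w := by
  constructor
  · intro h
    exact pow5_inj (show z ^ 5 = (-fifthRoot w) ^ 5 by
      rw [Odd.neg_pow (by decide), fifthRoot_pow]; linarith)
  · intro h
    subst h
    rw [Odd.neg_pow (by decide), fifthRoot_pow]
    ring

lemma continuous_gBS : Continuous (fun p : ℝ × ℝ => gBS p.1 p.2) := by
  unfold gBS
  exact (continuous_fifthRoot.comp (by continuity)).neg

lemma gBS_zero : gBS 0 0 = 0 := by
  have : fifthRoot 0 = 0 := by
    have := fifthRoot_pow' 0; simpa using this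
  simp [gBS, this]

lemma gBS_flat {x y : ℝ} (h : Real.sqrt (x ^ 2 + y ^ 2) < 1) :
    |gBS x y| ≤ 2 * Real.sqrt (x ^ 2 + y ^ 2) ^ ((8:ℝ)/5) := by
  set r := Real.sqrt (x ^ 2 + y ^ 2) with hr
  have hr0 : 0 ≤ r := Real.sqrt_nonneg _
  have hx : |x| ≤ r := by
    rw [hr, ← Real.sqrt_sq_eq_abs]
    exact Real.sqrt_le_sqrt (by nlinarith [sq_nonneg y])
  have hy : |y| ≤ r := by
    rw [hr, ← Real.sqrt_sq_eq_abs]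
    exact Real.sqrt_le_sqrt (by nlinarith [sq_nonneg x])
  have hw : |y ^ 7 * x + x ^ 15| ≤ 2 * r ^ (8:ℕ) := by
    calc |y ^ 7 * x + x ^ 15| ≤ |y ^ 7 * x| + |x ^ 15| := abs_add_le _ _
    _ = |y| ^ 7 * |x| + |x| ^ 15 := by rw [abs_mul, abs_pow, abs_pow]
    _ ≤ r ^ 7 * r + r ^ 15 := by
        gcongr <;> first | exact abs_nonneg _ | assumption
    _ = r ^ 8 + r ^ 15 := by ring
    _ ≤ r ^ 8 + r ^ 8 := by
        gcongr r ^ 8 + ?_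
        exact pow_le_pow_of_le_one hr0 h.le (by norm_num)
    _ = 2 * r ^ (8:ℕ) := by ring
  have h1 : |gBS x y| = |y ^ 7 * x + x ^ 15| ^ ((1:ℝ)/5) := by
    rw [gBS, abs_neg, abs_fifthRoot]
  rw [h1]
  calc |y ^ 7 * x + x ^ 15| ^ ((1:ℝ)/5) ≤ (2 * r ^ (8:ℕ)) ^ ((1:ℝ)/5) :=
        Real.rpow_le_rpow (abs_nonneg _) hw (by norm_num)
  _ = 2 ^ ((1:ℝ)/5) * (r ^ (8:ℕ)) ^ ((1:ℝ)/5) :=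
        Real.mul_rpow (by norm_num) (by positivity)
  _ ≤ 2 * r ^ ((8:ℝ)/5) := by
      have e1 : (r ^ (8:ℕ)) ^ ((1:ℝ)/5) = r ^ ((8:ℝ)/5) := by
        rw [← Real.rpow_natCast r 8, ← Real.rpow_mul hr0]; norm_num
      rw [e1]
      have h2 : (2:ℝ) ^ ((1:ℝ)/5) ≤ 2 := by
        calc (2:ℝ) ^ ((1:ℝ)/5) ≤ 2 ^ (1:ℝ) :=
              Real.rpow_le_rpow_of_exponent_le (by norm_num) (by norm_num)
        _ = 2 := Real.rpow_one 2
      exact mul_le_mul h2 le_rfl (by positivity) (by norm_num)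

abbrev E3 := EuclideanSpace ℝ (Fin 3)

lemma smul_decomp (α β γ : ℝ) (a e : E3) :
    α • (β • a + γ • e) = (α * β) • a + (α * γ) • e := by
  rw [smul_add, smul_smul, smul_smul]

lemma norm_eq3 (v : E3) : ‖v‖ = Real.sqrt (v 0 ^ 2 + v 1 ^ 2 + v 2 ^ 2) := by
  rw [EuclideanSpace.norm_eq]
  simp [Fin.sum_univ_three, Real.norm_eq_abs, sq_abs]

noncomputable def A3 : Set E3 :=
  (fun v : E3 => v 2 ^ 5 + v 1 ^ 7 * v 0 + v 0 ^ 15) ⁻¹' {0}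

lemma mem_A3 {v : E3} : v ∈ A3 ↔ v 2 = gBS (v 0) (v 1) := by
  rw [A3, Set.mem_preimage, Set.mem_singleton_iff, add_assoc, graph_key, gBS]

lemma r_le_norm (v : E3) : Real.sqrt (v 0 ^ 2 + v 1 ^ 2) ≤ ‖v‖ := by
  rw [norm_eq3]
  exact Real.sqrt_le_sqrt (by nlinarith [sq_nonneg (v 2)])

lemma flat3 {v : E3} (hv : v ∈ A3) (h : ‖v‖ < 1) : |v 2| ≤ 2 * ‖v‖ ^ ((8:ℝ)/5) := by
  have h1 : Real.sqrt (v 0 ^ 2 + v 1 ^ 2) < 1 := lt_of_le_of_lt (r_le_norm v) h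
  calc |v 2| = |gBS (v 0) (v 1)| := by rw [mem_A3.1 hv]
  _ ≤ 2 * Real.sqrt (v 0 ^ 2 + v 1 ^ 2) ^ ((8:ℝ)/5) := gBS_flat h1
  _ ≤ 2 * ‖v‖ ^ ((8:ℝ)/5) := by
      have := Real.rpow_le_rpow (Real.sqrt_nonneg _) (r_le_norm v) (by norm_num : (0:ℝ) ≤ 8/5)
      linarith

lemma dir_coord2 {a : E3} (ha : a ∈ dirSet A3 0) : a 2 = 0 := by
  obtain ⟨-, x, hx, hx0, hxa⟩ := ha
  simp only [sub_zero] at hxa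
  -- norms tend to zero
  have hnorm : Tendsto (fun i => ‖x i‖) atTop (𝓝 0) := by
    have := hx0.norm
    simpa using this
  -- the 2nd coordinate of the normalized sequence tends to a 2
  have hcoord : Tendsto (fun i => (‖x i‖⁻¹ • x i) 2) atTop (𝓝 (a 2)) :=
    ((EuclideanSpace.proj (2 : Fin 3)).continuous.tendsto a).comp hxa
  -- squeeze: |(‖x i‖⁻¹ • x i) 2| ≤ 2 ‖x i‖^(3/5) eventually
  have hev : ∀ᶠ i in atTop, ‖(‖x i‖⁻¹ • x i) 2‖ ≤ 2 * ‖x i‖ ^ ((3:ℝ)/5) := by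
    filter_upwards [hnorm.eventually (gt_mem_nhds (by norm_num : (0:ℝ) < 1))] with i hi
    have hpos : 0 < ‖x i‖ := norm_pos_iff.2 (hx i).2
    have hflat := flat3 (hx i).1 (lt_of_abs_lt (by rwa [abs_of_nonneg (norm_nonneg _)]))
    have heq : (‖x i‖⁻¹ • x i) 2 = ‖x i‖⁻¹ * x i 2 := rfl
    rw [heq, Real.norm_eq_abs, abs_mul, abs_of_nonneg (inv_nonneg.2 (norm_nonneg _))]
    have hkey : ‖x i‖⁻¹ * ‖x i‖ ^ ((8:ℝ)/5) = ‖x i‖ ^ ((3:ℝ)/5) := by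
      rw [← Real.rpow_neg_one ‖x i‖, ← Real.rpow_add hpos]
      norm_num
    calc ‖x i‖⁻¹ * |x i 2| ≤ ‖x i‖⁻¹ * (2 * ‖x i‖ ^ ((8:ℝ)/5)) := by
          exact mul_le_mul_of_nonneg_left hflat (inv_nonneg.2 (norm_nonneg _))
    _ = 2 * ‖x i‖ ^ ((3:ℝ)/5) := by rw [← hkey]; ring
  -- the bound tends to 0
  have hb : Tendsto (fun i => 2 * ‖x i‖ ^ ((3:ℝ)/5)) atTop (𝓝 0) := by
    have hc : ContinuousAt (fun t : ℝ => 2 * t ^ ((3:ℝ)/5)) 0 :=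
      (continuousAt_const.mul (Real.continuousAt_rpow_const 0 _ (Or.inr (by norm_num))))
    have := hc.tendsto.comp hnorm
    simpa [Function.comp_def, Real.zero_rpow (by norm_num : (3:ℝ)/5 ≠ 0)] using this
  have h0 : Tendsto (fun i => (‖x i‖⁻¹ • x i) 2) atTop (𝓝 0) :=
    squeeze_zero_norm' hev hb
  exact tendsto_nhds_unique hcoord h0

set_option maxHeartbeats 1000000 in
lemma dir_mem (v : E3) (hv2 : v 2 = 0) (hv : v ≠ 0) : (‖v‖⁻¹ • v) ∈ dirSet A3 0 := by
  set n := ‖v‖ with hn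
  have hnpos : 0 < n := norm_pos_iff.2 hv
  set a := n⁻¹ • v with hadef
  have hna : n • a = v := smul_inv_smul₀ hnpos.ne' v
  have hn2 : v 0 ^ 2 + v 1 ^ 2 = n ^ 2 := by
    have : n = Real.sqrt (v 0 ^ 2 + v 1 ^ 2 + v 2 ^ 2) := norm_eq3 v
    rw [this, Real.sq_sqrt (by positivity), hv2]; ring
  set e2 : E3 := EuclideanSpace.single (2 : Fin 3) (1 : ℝ) with he2
  set c : ℕ → ℝ := fun i => ((i : ℝ) + 1)⁻¹ with hcdef
  have hcpos : ∀ i, 0 < c i := fun i => by positivity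
  set h : ℕ → ℝ := fun i => gBS (c i * v 0) (c i * v 1) with hhdef
  set x : ℕ → E3 := fun i => c i • v + h i • e2 with hxdef
  -- coordinates of x i
  have hx0 : ∀ i, x i 0 = c i * v 0 := fun i => by
    simp [hxdef, he2, EuclideanSpace.single_apply]
  have hx1 : ∀ i, x i 1 = c i * v 1 := fun i => by
    simp [hxdef, he2, EuclideanSpace.single_apply]
  have hx2 : ∀ i, x i 2 = h i := fun i => by
    simp [hxdef, he2, EuclideanSpace.single_apply, hv2]
  -- membership
  have hmem : ∀ i, x i ∈ A3 := fun i => mem_A3.2 (by rw [hx0, hx1, hx2])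
  -- r value
  have hr : ∀ i, Real.sqrt ((c i * v 0) ^ 2 + (c i * v 1) ^ 2) = c i * n := by
    intro i
    have : (c i * v 0) ^ 2 + (c i * v 1) ^ 2 = (c i * n) ^ 2 := by
      have e : (c i * v 0) ^ 2 + (c i * v 1) ^ 2 = c i ^ 2 * (v 0 ^ 2 + v 1 ^ 2) := by ring
      rw [e, hn2]; ring
    rw [this, Real.sqrt_sq (by positivity)]
  -- nonzero
  have hxne : ∀ i, x i ≠ 0 := by
    intro i h0
    have h01 : v 0 = 0 ∧ v 1 = 0 := by
      constructor
      · have : x i 0 = 0 := by rw [h0]; rfl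
        rw [hx0] at this
        exact (mul_eq_zero.1 this).resolve_left (hcpos i).ne'
      · have : x i 1 = 0 := by rw [h0]; rfl
        rw [hx1] at this
        exact (mul_eq_zero.1 this).resolve_left (hcpos i).ne'
    have : n ^ 2 = 0 := by rw [← hn2, h01.1, h01.2]; ring
    exact hnpos.ne' (by nlinarith)
  -- c tends to 0
  have hc0 : Tendsto c atTop (𝓝 0) := by
    have := tendsto_one_div_add_atTop_nhds_zero_nat (𝕜 := ℝ)
    simpa [hcdef, one_div] using this
  -- x tends to 0
  have hxlim : Tendsto x atTop (𝓝 0) := by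
    have hF : Continuous (fun t : ℝ => t • v + gBS (t * v 0) (t * v 1) • e2) := by
      apply Continuous.add
      · exact continuous_id.smul continuous_const
      · exact (continuous_gBS.comp (by continuity : Continuous fun t : ℝ =>
          ((t * v 0, t * v 1) : ℝ × ℝ))).smul continuous_const
    have := (hF.tendsto 0).comp hc0
    simpa [Function.comp_def, gBS_zero] using this
  -- s and its limit
  set s : ℕ → ℝ := fun i => h i / (c i * n) with hsdef
  have hcn : ∀ i, 0 < c i * n := fun i => mul_pos (hcpos i) hnpos
  have hs0 : Tendsto s atTop (𝓝 0) := by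
    have hcnlim : Tendsto (fun i => c i * n) atTop (𝓝 0) := by
      have := hc0.mul_const n; simpa using this
    have hblim : Tendsto (fun i => 2 * (c i * n) ^ ((3:ℝ)/5)) atTop (𝓝 0) := by
      have hcont : ContinuousAt (fun t : ℝ => 2 * t ^ ((3:ℝ)/5)) 0 :=
        continuousAt_const.mul (Real.continuousAt_rpow_const 0 _ (Or.inr (by norm_num)))
      have := hcont.tendsto.comp hcnlim
      simpa [Function.comp_def, Real.zero_rpow (by norm_num : (3:ℝ)/5 ≠ 0)] using this
    apply squeeze_zero_norm' ?_ hblim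
    filter_upwards [hcnlim.eventually (gt_mem_nhds (by norm_num : (0:ℝ) < 1))] with i hi
    have hflat : |h i| ≤ 2 * (c i * n) ^ ((8:ℝ)/5) := by
      have := gBS_flat (x := c i * v 0) (y := c i * v 1) (by rw [hr i]; exact hi)
      rwa [hr i] at this
    have hkey : (c i * n) ^ ((8:ℝ)/5) / (c i * n) = (c i * n) ^ ((3:ℝ)/5) := by
      rw [div_eq_mul_inv, ← Real.rpow_neg_one (c i * n), ← Real.rpow_add (hcn i)]
      norm_num
    rw [Real.norm_eq_abs, hsdef]
    calc |h i / (c i * n)| = |h i| / (c i * n) := by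
          rw [abs_div, abs_of_pos (hcn i)]
    _ ≤ 2 * (c i * n) ^ ((8:ℝ)/5) / (c i * n) := by
          exact div_le_div_of_nonneg_right hflat (hcn i).le |>.trans_eq rfl
    _ = 2 * (c i * n) ^ ((3:ℝ)/5) := by rw [mul_div_assoc, hkey]
  -- the norm of x i
  have hnorm : ∀ i, ‖x i‖ = (c i * n) * Real.sqrt (1 + s i ^ 2) := by
    intro i
    have hrhs : (c i * n) * Real.sqrt (1 + s i ^ 2)
        = Real.sqrt ((c i * n) ^ 2 * (1 + s i ^ 2)) := by
      rw [Real.sqrt_mul (by positivity), Real.sqrt_sq (hcn i).le]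
    rw [norm_eq3, hx0, hx1, hx2, hrhs]
    congr 1
    have hhs : h i = s i * (c i * n) := by
      rw [hsdef]; exact (div_mul_cancel₀ _ (hcn i).ne').symm
    rw [hhs]
    have e : (c i * v 0) ^ 2 + (c i * v 1) ^ 2 = c i ^ 2 * (v 0 ^ 2 + v 1 ^ 2) := by ring
    nlinarith [hn2, e]
  -- the normalized sequence
  have hkey : ∀ i, ‖x i‖⁻¹ • x i
      = (Real.sqrt (1 + s i ^ 2))⁻¹ • a + (s i / Real.sqrt (1 + s i ^ 2)) • e2 := by
    intro i
    have hsq : 0 < Real.sqrt (1 + s i ^ 2) := Real.sqrt_pos.2 (by positivity)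
    have hxa : x i = (c i * n) • a + h i • e2 := by
      rw [hxdef]
      congr 1
      rw [hadef, smul_smul, mul_assoc, mul_inv_cancel₀ hnpos.ne', mul_one]
    rw [hnorm i, hxa, smul_decomp]
    have hhs : h i = s i * (c i * n) := by rw [hsdef]; exact (div_mul_cancel₀ _ (hcn i).ne').symm
    have e1 : (c i * n * Real.sqrt (1 + s i ^ 2))⁻¹ * (c i * n)
        = (Real.sqrt (1 + s i ^ 2))⁻¹ := by
      rw [mul_inv]
      rw [mul_right_comm, inv_mul_cancel₀ (hcn i).ne', one_mul]
    have e2' : (c i * n * Real.sqrt (1 + s i ^ 2))⁻¹ * h i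
        = s i / Real.sqrt (1 + s i ^ 2) := by
      rw [hhs, mul_inv]
      rw [mul_comm _ (s i * (c i * n)), mul_assoc, ← mul_assoc (c i * n), mul_inv_cancel₀ (hcn i).ne', one_mul, div_eq_mul_inv]
    rw [e1, e2']
  -- limits of the two scalar coefficients
  have hG : Tendsto (fun i => (Real.sqrt (1 + s i ^ 2))⁻¹) atTop (𝓝 1) := by
    have hcont : Continuous (fun t : ℝ => (Real.sqrt (1 + t ^ 2))⁻¹) := by
      apply Continuous.inv₀
      · exact Real.continuous_sqrt.comp (by continuity)
      · intro t; exact (Real.sqrt_pos.2 (by positivity)).ne'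
    have := (hcont.tendsto 0).comp hs0
    simpa [Function.comp_def] using this
  have hH : Tendsto (fun i => s i / Real.sqrt (1 + s i ^ 2)) atTop (𝓝 0) := by
    have hcont : Continuous (fun t : ℝ => t / Real.sqrt (1 + t ^ 2)) := by
      apply Continuous.div continuous_id (Real.continuous_sqrt.comp (by continuity))
      intro t; exact (Real.sqrt_pos.2 (by positivity)).ne'
    have := (hcont.tendsto 0).comp hs0
    simpa [Function.comp_def] using this
  have hulim : Tendsto (fun i => ‖x i‖⁻¹ • x i) atTop (𝓝 a) := by
    have : Tendsto (fun i => (Real.sqrt (1 + s i ^ 2))⁻¹ • a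
        + (s i / Real.sqrt (1 + s i ^ 2)) • e2) atTop (𝓝 ((1:ℝ) • a + (0:ℝ) • e2)) :=
      (hG.smul_const a).add (hH.smul_const e2)
    simp only [one_smul, zero_smul, add_zero] at this
    exact this.congr (fun i => (hkey i).symm)
  refine ⟨?_, x, fun i => ⟨hmem i, hxne i⟩, hxlim, ?_⟩
  · rw [hadef, norm_smul, norm_inv, norm_norm, ← hn, inv_mul_cancel₀ hnpos.ne']
  · simpa [sub_zero] using hulim

theorem stmt16 :
    -- `A = f₀⁻¹(0)` is the graph of `g`
    ((fun v : EuclideanSpace ℝ (Fin 3) => v 2 ^ 5 + v 1 ^ 7 * v 0 + v 0 ^ 15) ⁻¹' {0}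
        = {v : EuclideanSpace ℝ (Fin 3) | v 2 = gBS (v 0) (v 1)}) ∧
    -- `g` is continuous
    Continuous (fun p : ℝ × ℝ => gBS p.1 p.2) ∧
    -- `g` satisfies the flat condition at `0 ∈ ℝ²`
    (∃ e > (0 : ℝ), ∃ C > (0 : ℝ), ∃ δ > (0 : ℝ), ∀ x y : ℝ,
      Real.sqrt (x ^ 2 + y ^ 2) < δ →
        |gBS x y| ≤ C * Real.sqrt (x ^ 2 + y ^ 2) ^ ((1 : ℝ) + e)) ∧
    -- consequently `LD_0(A) = ℝ² × {0}`
    LDir ((fun v : EuclideanSpace ℝ (Fin 3) =>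
        v 2 ^ 5 + v 1 ^ 7 * v 0 + v 0 ^ 15) ⁻¹' {0}) 0
      = {v : EuclideanSpace ℝ (Fin 3) | v 2 = 0} := by
  refine ⟨?_, continuous_gBS, ?_, ?_⟩
  · ext v
    exact mem_A3
  · refine ⟨3/5, by norm_num, 2, by norm_num, 1, by norm_num, fun x y hxy => ?_⟩
    have := gBS_flat hxy
    rwa [show (1:ℝ) + 3/5 = 8/5 by norm_num]
  · show LDir A3 0 = {v : E3 | v 2 = 0}
    ext v
    constructor
    · rintro ⟨a, ha, t, ht, rfl⟩
      have h2 : a 2 = 0 := dir_coord2 ha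
      show t * a 2 = 0
      rw [h2]; ring
    · intro hv
      by_cases h0 : v = 0
      · refine ⟨_, dir_mem (EuclideanSpace.single 0 1) ?_ ?_, 0, le_rfl, ?_⟩
        · simp [EuclideanSpace.single_apply]
        · intro h
          have h1 : (EuclideanSpace.single (0 : Fin 3) (1:ℝ)) 0 = 0 := by rw [h]; rfl
          simp [EuclideanSpace.single_apply] at h1
        · rw [h0, zero_smul]
      · exact ⟨‖v‖⁻¹ • v, dir_mem v hv h0, ‖v‖, norm_nonneg v,
          (smul_inv_smul₀ (norm_ne_zero_iff.2 h0) v).symm⟩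
end

section
/- Let f₀ : ℝ³ → ℝ be defined by f₀(x,y,z) := z⁵ + y⁷x + x¹⁵ and let A := f₀⁻¹(0). Then ({0} × ℝ × ℝ) ∪ (ℝ × {0} × ℝ) ∪ (ℝ × ℝ × {0}) ⊆ L𝒢D_0(A); in particular ℝ × ℝ × {0} is a proper subset of L𝒢D_0(A), even though LD_0(A) = ℝ² × {0}. -/
open Filter Topology Set Asymptotics

variable {E : Type*} [NormedAddCommGroup E] [NormedSpace ℝ E]

noncomputable abbrev V (a b c : ℝ) : EuclideanSpace ℝ (Fin 3) := (WithLp.equiv 2 _).symm ![a, b, c]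

@[simp] lemma V_apply0 (a b c : ℝ) : V a b c 0 = a := rfl
@[simp] lemma V_apply1 (a b c : ℝ) : V a b c 1 = b := rfl
@[simp] lemma V_apply2 (a b c : ℝ) : V a b c 2 = c := rfl

lemma V_eta (v : EuclideanSpace ℝ (Fin 3)) : V (v 0) (v 1) (v 2) = v := by
  ext j
  fin_cases j <;> rfl

@[simp] lemma V_zero : V 0 0 0 = (0 : EuclideanSpace ℝ (Fin 3)) := by
  ext j; fin_cases j <;> rfl

lemma smul_V (t a b c : ℝ) : t • V a b c = V (t*a) (t*b) (t*c) := by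
  ext j; fin_cases j <;> simp [PiLp.smul_apply]

lemma norm_V (a b c : ℝ) : ‖V a b c‖ = Real.sqrt (a^2 + b^2 + c^2) := by
  rw [EuclideanSpace.norm_eq]
  simp [Fin.sum_univ_three, sq_abs]

lemma coord_le_norm (v : EuclideanSpace ℝ (Fin 3)) (j : Fin 3) : |v j| ≤ ‖v‖ := by
  have hn : ‖v‖ = Real.sqrt (v 0 ^ 2 + v 1 ^ 2 + v 2 ^ 2) := by
    conv_lhs => rw [← V_eta v]
    rw [norm_V]
  have h0 : |v j| = Real.sqrt ((v j)^2) := (Real.sqrt_sq_eq_abs _).symm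
  rw [h0, hn]
  apply Real.sqrt_le_sqrt
  fin_cases j
  · show v 0 ^ 2 ≤ _; nlinarith [sq_nonneg (v 1), sq_nonneg (v 2)]
  · show v 1 ^ 2 ≤ _; nlinarith [sq_nonneg (v 0), sq_nonneg (v 2)]
  · show v 2 ^ 2 ≤ _; nlinarith [sq_nonneg (v 0), sq_nonneg (v 1)]

lemma coord_limit {f : ℝ → ℝ} {d v : ℝ} (h : HasDerivAt f d 0) (h0 : f 0 = v) :
    Tendsto (fun t => t⁻¹ * (f t - v)) (𝓝[>] (0:ℝ)) (𝓝 d) := by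
  have hs := hasDerivAt_iff_tendsto_slope.1 h
  have hmono : 𝓝[>] (0:ℝ) ≤ 𝓝[≠] (0:ℝ) :=
    nhdsWithin_mono _ (fun x hx => ne_of_gt hx)
  refine (hs.mono_left hmono).congr fun t => ?_
  rw [slope_def_field, h0, div_eq_inv_mul, sub_zero]

lemma root5_le {r s : ℝ} (hr : 0 ≤ r) (hs : 0 ≤ s) (h : r^5 ≤ 2 * s^8) :
    r ≤ 2 * s ^ ((3:ℝ)/5) * s := by
  have h1 : r = ((r^5 : ℝ)) ^ ((5:ℝ)⁻¹) := (Real.pow_rpow_inv_natCast hr (by norm_num)).symm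
  have h2 : ((r^5 : ℝ)) ^ ((5:ℝ)⁻¹) ≤ ((2*s^8 : ℝ)) ^ ((5:ℝ)⁻¹) :=
    Real.rpow_le_rpow (by positivity) h (by norm_num)
  have h3 : ((2*s^8 : ℝ)) ^ ((5:ℝ)⁻¹) = 2 ^ ((5:ℝ)⁻¹) * (s^8) ^ ((5:ℝ)⁻¹) :=
    Real.mul_rpow (by norm_num) (by positivity)
  have h4 : (2:ℝ) ^ ((5:ℝ)⁻¹) ≤ 2 := by
    nth_rewrite 2 [(Real.rpow_one 2).symm]
    exact Real.rpow_le_rpow_of_exponent_le one_le_two (by norm_num)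
  have h5 : ((s^8 : ℝ)) ^ ((5:ℝ)⁻¹) = s ^ ((3:ℝ)/5) * s := by
    rw [← Real.rpow_natCast s 8, ← Real.rpow_mul hs]
    norm_num
    rw [show (8:ℝ)/5 = 3/5 + 1 by norm_num, Real.rpow_add' hs (by norm_num), Real.rpow_one]
  calc r = _ := h1
    _ ≤ _ := h2
    _ = _ := h3
    _ ≤ 2 * (s ^ ((3:ℝ)/5) * s) := by
        rw [h5]; exact mul_le_mul_of_nonneg_right h4 (by positivity)
    _ = 2 * s ^ ((3:ℝ)/5) * s := by ring

lemma sign_pow5 (w : ℝ) : (Real.sign w)^5 = Real.sign w := by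
  rcases lt_trichotomy w 0 with h | h | h
  · rw [Real.sign_of_neg h]; norm_num
  · rw [h, Real.sign_zero]; norm_num
  · rw [Real.sign_of_pos h]; norm_num

lemma rpow_tendsto_zero {α : Type*} {l : Filter α} {u : α → ℝ} {c : ℝ} (hc : 0 < c)
    (hu : Tendsto u l (𝓝 0)) : Tendsto (fun s => (u s) ^ (c:ℝ)) l (𝓝 0) := by
  have hca : ContinuousAt (fun x : ℝ => x ^ (c:ℝ)) 0 :=
    Real.continuousAt_rpow_const 0 c (Or.inr hc.le)
  have := hca.tendsto.comp hu
  rwa [Real.zero_rpow hc.ne'] at this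

lemma tendsto_V {α : Type*} {l : Filter α} {f g h : α → ℝ} {a b c : ℝ}
    (hf : Tendsto f l (𝓝 a)) (hg : Tendsto g l (𝓝 b)) (hh : Tendsto h l (𝓝 c)) :
    Tendsto (fun s => V (f s) (g s) (h s)) l (𝓝 (V a b c)) := by
  have key : Tendsto (fun s => ![f s, g s, h s]) l (𝓝 ![a, b, c]) := by
    rw [tendsto_pi_nhds]
    intro i
    fin_cases i
    · simpa using hf
    · simpa using hg
    · simpa using hh
  have := ((PiLp.continuousLinearEquiv 2 ℝ (fun _ : Fin 3 => ℝ)).symm.continuous.tendsto _).comp key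
  exact this

lemma mem_dirSet_of_seq {A : Set E} {p u : E} (hu : ‖u‖ = 1) (x : ℕ → E)
    (hA : ∀ᶠ i in atTop, x i ∈ A ∧ x i ≠ p)
    (hx : Tendsto x atTop (𝓝 p))
    (hd : Tendsto (fun i => ‖x i - p‖⁻¹ • (x i - p)) atTop (𝓝 u)) :
    u ∈ dirSet A p := by
  obtain ⟨N, hN⟩ := eventually_atTop.1 hA
  refine ⟨hu, fun i => x (i + N), fun i => hN _ (Nat.le_add_left _ _), ?_, ?_⟩
  · exact hx.comp (tendsto_add_atTop_nat N)
  · exact hd.comp (tendsto_add_atTop_nat N)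

lemma mem_dirSet_of_curve {A : Set E} {q w : E} (hw : w ≠ 0) (γ : ℝ → E)
    (hA : ∀ᶠ t in 𝓝[>] (0:ℝ), γ t ∈ A)
    (hd : Tendsto (fun t => t⁻¹ • (γ t - q)) (𝓝[>] (0:ℝ)) (𝓝 w)) :
    ‖w‖⁻¹ • w ∈ dirSet A q := by
  set t : ℕ → ℝ := fun i => ((i : ℝ) + 1)⁻¹ with ht_def
  have htpos : ∀ i, 0 < t i := fun i => by positivity
  have ht : Tendsto t atTop (𝓝[>] (0:ℝ)) := by
    refine tendsto_nhdsWithin_iff.2 ⟨?_, Eventually.of_forall htpos⟩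
    simpa [ht_def, one_div] using tendsto_one_div_add_atTop_nhds_zero_nat (𝕜 := ℝ)
  have ht0 : Tendsto t atTop (𝓝 (0:ℝ)) := ht.mono_right nhdsWithin_le_nhds
  set x : ℕ → E := fun i => γ (t i) with hx_def
  set v : ℕ → E := fun i => (t i)⁻¹ • (x i - q) with hv_def
  have hv : Tendsto v atTop (𝓝 w) := hd.comp ht
  have hsub : ∀ i, x i - q = t i • v i := fun i => (smul_inv_smul₀ (htpos i).ne' _).symm
  have hxq : Tendsto x atTop (𝓝 q) := by
    have h1 : Tendsto (fun i => t i • v i) atTop (𝓝 ((0:ℝ) • w)) := ht0.smul hv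
    rw [zero_smul] at h1
    have h2 : Tendsto (fun i => x i - q) atTop (𝓝 0) := by
      simpa only [← hsub] using h1
    simpa using h2.add_const q
  have hnv : Tendsto (fun i => ‖v i‖) atTop (𝓝 ‖w‖) := hv.norm
  have hne : ∀ᶠ i in atTop, x i ∈ A ∧ x i ≠ q := by
    have hw' : 0 < ‖w‖ := norm_pos_iff.2 hw
    filter_upwards [ht.eventually hA, hnv.eventually (eventually_gt_nhds (show ‖w‖ / 2 < ‖w‖ by linarith))] with i hiA hiv
    refine ⟨hiA, fun hx0 => ?_⟩
    have h0 : t i • v i = 0 := by rw [← hsub i, hx0, sub_self]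
    rcases smul_eq_zero.1 h0 with h | h
    · exact (htpos i).ne' h
    · rw [h, norm_zero] at hiv; linarith
  have hdir : Tendsto (fun i => ‖x i - q‖⁻¹ • (x i - q)) atTop (𝓝 (‖w‖⁻¹ • w)) := by
    have hcont : Tendsto (fun y : E => ‖y‖⁻¹ • y) (𝓝 w) (𝓝 (‖w‖⁻¹ • w)) :=
      Tendsto.smul ((continuous_norm.tendsto w).inv₀ (norm_ne_zero_iff.2 hw)) tendsto_id
    have h2 := hcont.comp hv
    have key : ∀ i, ‖x i - q‖⁻¹ • (x i - q) = ‖v i‖⁻¹ • v i := by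
      intro i
      conv_lhs => rw [hsub i]
      rw [norm_smul, Real.norm_eq_abs, abs_of_pos (htpos i), mul_inv, smul_smul]
      congr 1
      field_simp
      rw [div_mul_cancel_left₀ (htpos i).ne', one_div]
    exact h2.congr fun i => (key i).symm
  refine mem_dirSet_of_seq (by rw [norm_smul, norm_inv, norm_norm, inv_mul_cancel₀ (norm_ne_zero_iff.2 hw)]) x hne hxq hdir

abbrev Af : Set (EuclideanSpace ℝ (Fin 3)) :=
  (fun v : EuclideanSpace ℝ (Fin 3) => v 2 ^ 5 + v 1 ^ 7 * v 0 + v 0 ^ 15) ⁻¹' {0}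

lemma mem_Af {x y z : ℝ} : V x y z ∈ Af ↔ z^5 + y^7*x + x^15 = 0 := by
  simp [Af, Set.mem_preimage]

lemma abs_sign_le (w : ℝ) : |Real.sign w| ≤ 1 := by
  rcases lt_trichotomy w 0 with h | h | h
  · rw [Real.sign_of_neg h]; norm_num
  · rw [h, Real.sign_zero]; norm_num
  · rw [Real.sign_of_pos h]; norm_num


lemma tendsto_coord {α : Type*} {l : Filter α} {f : α → EuclideanSpace ℝ (Fin 3)}
    {a : EuclideanSpace ℝ (Fin 3)} (h : Tendsto f l (𝓝 a)) (j : Fin 3) :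
    Tendsto (fun s => f s j) l (𝓝 (a j)) :=
  ((EuclideanSpace.proj j).continuous.tendsto a).comp h

lemma curve_dir_coords {A : Set (EuclideanSpace ℝ (Fin 3))} {q w : EuclideanSpace ℝ (Fin 3)}
    (hw : w ≠ 0) (x y z : ℝ → ℝ)
    (hA : ∀ᶠ t in 𝓝[>] (0:ℝ), V (x t) (y t) (z t) ∈ A)
    (h0 : Tendsto (fun t => t⁻¹ * (x t - q 0)) (𝓝[>] (0:ℝ)) (𝓝 (w 0)))
    (h1 : Tendsto (fun t => t⁻¹ * (y t - q 1)) (𝓝[>] (0:ℝ)) (𝓝 (w 1)))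
    (h2 : Tendsto (fun t => t⁻¹ * (z t - q 2)) (𝓝[>] (0:ℝ)) (𝓝 (w 2))) :
    ‖w‖⁻¹ • w ∈ dirSet A q := by
  apply mem_dirSet_of_curve hw (fun t => V (x t) (y t) (z t)) hA
  have h := tendsto_V h0 h1 h2
  rw [V_eta] at h
  refine h.congr fun t => ?_
  ext j
  fin_cases j <;> simp [PiLp.smul_apply, PiLp.sub_apply]
@[simp] lemma zero_apply3 (j : Fin 3) : (0 : EuclideanSpace ℝ (Fin 3)) j = 0 := rfl

lemma sign_mul_abs' (w : ℝ) : Real.sign w * |w| = w := by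
  rcases lt_trichotomy w 0 with h | h | h
  · rw [Real.sign_of_neg h, abs_of_neg h]; ring
  · rw [h, Real.sign_zero, abs_zero, mul_zero]
  · rw [Real.sign_of_pos h, abs_of_pos h, one_mul]

lemma rpow_inv_pow5 {r : ℝ} (hr : 0 ≤ r) : (r ^ ((5:ℝ)⁻¹)) ^ 5 = r := by
  rw [← Real.rpow_natCast (r ^ ((5:ℝ)⁻¹)) 5, ← Real.rpow_mul hr]
  norm_num

lemma rpow_inv_pow7 {r : ℝ} (hr : 0 ≤ r) : (r ^ ((7:ℝ)⁻¹)) ^ 7 = r := by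
  rw [← Real.rpow_natCast (r ^ ((7:ℝ)⁻¹)) 7, ← Real.rpow_mul hr]
  norm_num

lemma norm_V_unit {a b c : ℝ} (h : a^2 + b^2 + c^2 = 1) : ‖V a b c‖ = 1 := by
  rw [norm_V, h, Real.sqrt_one]

lemma dirI {a b : ℝ} (hab : a^2 + b^2 = 1) : V a b 0 ∈ dirSet Af 0 := by
  have ha1 : |a| ≤ 1 := by nlinarith [sq_abs a, sq_abs b, abs_nonneg a, abs_nonneg b, sq_nonneg (|a| - 1)]
  have hb1 : |b| ≤ 1 := by nlinarith [sq_abs a, sq_abs b, abs_nonneg a, abs_nonneg b, sq_nonneg (|b| - 1)]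
  set w : ℝ → ℝ := fun t => b^7*t^8*a + a^15*t^15 with hw_def
  set z : ℝ → ℝ := fun t => -(Real.sign (w t) * |w t| ^ ((5:ℝ)⁻¹)) with hz_def
  have hmem : ∀ t : ℝ, V (a*t) (b*t) (z t) ∈ Af := by
    intro t
    rw [mem_Af]
    have h5 : z t ^ 5 = -(w t) := by
      rw [hz_def]
      rw [Odd.neg_pow ⟨2, by norm_num⟩, mul_pow, sign_pow5,
        rpow_inv_pow5 (abs_nonneg _), sign_mul_abs' _]
    rw [h5, hw_def]
    ring
  have hzbound : ∀ t ∈ Ioo (0:ℝ) 1, |z t| ≤ 2 * t ^ ((3:ℝ)/5) * t := by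
    intro t ht
    have habs : |z t| ≤ |w t| ^ ((5:ℝ)⁻¹) := by
      rw [hz_def, abs_neg, abs_mul, abs_of_nonneg (Real.rpow_nonneg (abs_nonneg _) _)]
      calc |Real.sign (w t)| * |w t| ^ ((5:ℝ)⁻¹) ≤ 1 * |w t| ^ ((5:ℝ)⁻¹) :=
            mul_le_mul_of_nonneg_right (abs_sign_le _) (Real.rpow_nonneg (abs_nonneg _) _)
        _ = _ := one_mul _
    have hwb : |w t| ≤ 2 * t^8 := by
      have h1 : |w t| ≤ |b^7*t^8*a| + |a^15*t^15| := abs_add_le _ _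
      have h2 : |b^7*t^8*a| = |b|^7 * t^8 * |a| := by
        rw [abs_mul, abs_mul, abs_pow, abs_pow, abs_of_pos ht.1]
      have h3 : |a^15*t^15| = |a|^15 * t^15 := by
        rw [abs_mul, abs_pow, abs_pow, abs_of_pos ht.1]
      have hxz : |b|^7 * |a| ≤ 1 :=
        mul_le_one₀ (pow_le_one₀ (abs_nonneg _) hb1) (abs_nonneg _) ha1
      have h4 : |b|^7 * t^8 * |a| ≤ t^8 := by nlinarith [pow_pos ht.1 8]
      have h15 : t^15 ≤ t^8 := pow_le_pow_of_le_one ht.1.le ht.2.le (by norm_num)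
      have h5 : |a|^15 * t^15 ≤ t^8 :=
        calc |a|^15 * t^15 ≤ 1 * t^15 :=
              mul_le_mul_of_nonneg_right (pow_le_one₀ (abs_nonneg _) ha1) (pow_nonneg ht.1.le 15)
          _ = t^15 := one_mul _
          _ ≤ t^8 := h15
      linarith
    have hr : (|w t| ^ ((5:ℝ)⁻¹))^5 ≤ 2 * t^8 := by
      rw [rpow_inv_pow5 (abs_nonneg _)]
      exact hwb
    exact habs.trans (root5_le (Real.rpow_nonneg (abs_nonneg _) _) ht.1.le hr)
  have key := curve_dir_coords (A := Af) (q := 0) (w := V a b 0) ?_ (fun t => a*t) (fun t => b*t) z ?_ ?_ ?_ ?_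
  · rwa [norm_V_unit (by linarith), inv_one, one_smul] at key
  · intro h0
    have ha0 : a = 0 := by rw [← V_apply0 a b 0, h0]; rfl
    have hb0 : b = 0 := by rw [← V_apply1 a b 0, h0]; rfl
    rw [ha0, hb0] at hab
    norm_num at hab
  · exact Eventually.of_forall hmem
  · have hD : HasDerivAt (fun t : ℝ => a*t) a 0 := by simpa using (hasDerivAt_id (0:ℝ)).const_mul a
    simpa using coord_limit (v := (0 : EuclideanSpace ℝ (Fin 3)) 0) hD (by simp)
  · have hD : HasDerivAt (fun t : ℝ => b*t) b 0 := by simpa using (hasDerivAt_id (0:ℝ)).const_mul b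
    simpa using coord_limit (v := (0 : EuclideanSpace ℝ (Fin 3)) 1) hD (by simp)
  · simp only [V_apply2, zero_apply3, sub_zero]
    rw [tendsto_zero_iff_abs_tendsto_zero]
    have hIoo : Ioo (0:ℝ) 1 ∈ 𝓝[>] (0:ℝ) := Ioo_mem_nhdsGT_of_mem ⟨le_refl _, by norm_num⟩
    apply squeeze_zero' (Eventually.of_forall fun t => abs_nonneg _)
      (g := fun t => 2 * t ^ ((3:ℝ)/5))
    · filter_upwards [hIoo] with t ht
      have := hzbound t ht
      rw [abs_mul, abs_inv, abs_of_pos ht.1]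
      calc t⁻¹ * |z t| ≤ t⁻¹ * (2 * t ^ ((3:ℝ)/5) * t) := by
            gcongr
            exact inv_nonneg.2 ht.1.le
        _ = 2 * t ^ ((3:ℝ)/5) := by
            rw [show t⁻¹ * (2 * t ^ ((3:ℝ)/5) * t) = 2 * t ^ ((3:ℝ)/5) * (t * t⁻¹) by ring,
              mul_inv_cancel₀ ht.1.ne', mul_one]
    · have hid : Tendsto (fun t : ℝ => t) (𝓝[>] (0:ℝ)) (𝓝 0) := tendsto_id.mono_right nhdsWithin_le_nhds
      simpa using (rpow_tendsto_zero (by norm_num : (0:ℝ) < 3/5) hid).const_mul 2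
lemma pow7_rpow_inv {r : ℝ} (hr : 0 ≤ r) : (r^7 : ℝ) ^ ((7:ℝ)⁻¹) = r := by
  rw [← Real.rpow_natCast r 7, ← Real.rpow_mul hr]
  norm_num

lemma dirII {b c y₀ : ℝ} (hy₀ : 0 < y₀) (hc : c ≠ 0) (hbc : b^2 + c^2 = 1) :
    V 0 b c ∈ dirSet Af (V 0 y₀ 0) := by
  set x : ℝ → ℝ := fun t => -c^5 * t^5 / (y₀ + b*t)^7 with hx_def
  set inr : ℝ → ℝ := fun t => (y₀ + b*t)^7 - (x t)^14 with hinr_def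
  set y : ℝ → ℝ := fun t => (inr t) ^ ((7:ℝ)⁻¹) with hy_def
  have hlin : HasDerivAt (fun t : ℝ => y₀ + b*t) b 0 := by
    simpa using ((hasDerivAt_id (0:ℝ)).const_mul b).const_add y₀
  have hden : HasDerivAt (fun t : ℝ => (y₀ + b*t)^7) (7*y₀^6*b) 0 := by
    have h := hlin.pow 7
    norm_num at h
    exact h
  have hnum : HasDerivAt (fun t : ℝ => -c^5 * t^5) 0 0 := by
    have h := (hasDerivAt_pow 5 (0:ℝ)).const_mul (-c^5)
    refine h.congr_deriv ?_
    norm_num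
  have hd0 : (y₀ + b*0)^7 ≠ 0 := by norm_num; positivity
  have hxD : HasDerivAt x 0 0 := by
    have h := hnum.div hden hd0
    refine h.congr_deriv ?_
    norm_num
  have hx0 : x 0 = 0 := by rw [hx_def]; norm_num
  have hinrD : HasDerivAt inr (7*y₀^6*b) 0 := by
    have h := hden.sub (hxD.pow 14)
    refine h.congr_deriv ?_
    norm_num
  have hinr0 : inr 0 = y₀^7 := by
    simp only [hinr_def]
    rw [hx0]
    norm_num
  have hy0 : y 0 = y₀ := by
    simp only [hy_def, hinr0]
    exact pow7_rpow_inv hy₀.le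
  have hyD : HasDerivAt y b 0 := by
    have hrp := Real.hasDerivAt_rpow_const (x := inr 0) (p := (7:ℝ)⁻¹)
      (Or.inl (by rw [hinr0]; positivity))
    have h := hrp.comp 0 hinrD
    have hval : (7:ℝ)⁻¹ * inr 0 ^ ((7:ℝ)⁻¹ - 1) * (7*y₀^6*b) = b := by
      rw [hinr0, ← Real.rpow_natCast y₀ 7, ← Real.rpow_mul hy₀.le,
        show ((7:ℕ):ℝ) * ((7:ℝ)⁻¹ - 1) = -((6:ℕ):ℝ) by push_cast; norm_num,
        Real.rpow_neg hy₀.le, Real.rpow_natCast]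
      field_simp
    rw [← hval]
    exact h
  -- eventual membership
  have hcont1 : Tendsto (fun t : ℝ => y₀ + b*t) (𝓝 0) (𝓝 y₀) := by
    simpa using hlin.continuousAt.tendsto
  have hcont2 : Tendsto inr (𝓝 0) (𝓝 (y₀^7)) := by
    simpa [hinr0] using hinrD.continuousAt.tendsto
  have hev1 : ∀ᶠ t in 𝓝[>] (0:ℝ), 0 < y₀ + b*t :=
    (hcont1.eventually (eventually_gt_nhds hy₀)).filter_mono nhdsWithin_le_nhds
  have hev2 : ∀ᶠ t in 𝓝[>] (0:ℝ), 0 < inr t :=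
    (hcont2.eventually (eventually_gt_nhds (by positivity))).filter_mono nhdsWithin_le_nhds
  have hmem : ∀ᶠ t in 𝓝[>] (0:ℝ), V (x t) (y t) (c*t) ∈ Af := by
    filter_upwards [hev1, hev2] with t h1 h2
    rw [mem_Af]
    have hy7 : (y t)^7 = inr t := by
      simp only [hy_def]
      rw [← Real.rpow_natCast (inr t ^ _) 7, ← Real.rpow_mul h2.le]
      norm_num
    rw [hy7]
    simp only [hinr_def, hx_def]
    have hne : (y₀ + b*t)^7 ≠ 0 := ne_of_gt (by positivity)
    have hX : (y₀ + b*t)^7 * (-c^5*t^5/(y₀+b*t)^7) = -c^5*t^5 := by field_simp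
    linear_combination hX
  have key := curve_dir_coords (A := Af) (q := V 0 y₀ 0) (w := V 0 b c) ?_ x y (fun t => c*t)
      hmem ?_ ?_ ?_
  · rwa [norm_V_unit (by rw [show (0:ℝ)^2 + b^2 + c^2 = b^2+c^2 by ring, hbc]), inv_one,
      one_smul] at key
  · intro h0
    have : c = 0 := by rw [← V_apply2 0 b c, h0]; rfl
    exact hc this
  · exact coord_limit hxD hx0
  · exact coord_limit hyD hy0
  · have hD : HasDerivAt (fun t : ℝ => c*t) c 0 := by simpa using (hasDerivAt_id (0:ℝ)).const_mul c
    exact coord_limit hD (mul_zero c)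
lemma dirIII {a c x₀ : ℝ} (hx₀ : 0 < x₀) (hc : c ≠ 0) :
    ‖V a (-(2*x₀*a)) c‖⁻¹ • V a (-(2*x₀*a)) c ∈ dirSet Af (V x₀ (-x₀^2) 0) := by
  set G : ℝ → ℝ := fun t => ((c*t)^5 + (x₀ + a*t)^15)/(x₀ + a*t) with hG_def
  set y : ℝ → ℝ := fun t => -((G t) ^ ((7:ℝ)⁻¹)) with hy_def
  have hlin : HasDerivAt (fun t : ℝ => x₀ + a*t) a 0 := by
    simpa using ((hasDerivAt_id (0:ℝ)).const_mul a).const_add x₀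
  have hct : HasDerivAt (fun t : ℝ => c*t) c 0 := by
    simpa using (hasDerivAt_id (0:ℝ)).const_mul c
  have hnum : HasDerivAt (fun t : ℝ => (c*t)^5 + (x₀ + a*t)^15) (15*x₀^14*a) 0 := by
    have h := (hct.pow 5).add (hlin.pow 15)
    refine h.congr_deriv ?_
    norm_num
  have hlin0 : x₀ + a*0 ≠ 0 := by norm_num; exact hx₀.ne'
  have hGD : HasDerivAt G (14*x₀^13*a) 0 := by
    have h := hnum.div hlin hlin0
    refine h.congr_deriv ?_
    norm_num
    field_simp
    ring
  have hG0 : G 0 = x₀^14 := by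
    simp only [hG_def]
    norm_num
    field_simp
  have hy0 : y 0 = -x₀^2 := by
    simp only [hy_def, hG0]
    rw [show x₀^14 = (x₀^2)^7 by ring, pow7_rpow_inv (sq_nonneg x₀)]
  have hyD : HasDerivAt y (-(2*x₀*a)) 0 := by
    have hrp := Real.hasDerivAt_rpow_const (x := G 0) (p := (7:ℝ)⁻¹)
      (Or.inl (by rw [hG0]; positivity))
    have h := (hrp.comp 0 hGD).neg
    have hval : -((7:ℝ)⁻¹ * G 0 ^ ((7:ℝ)⁻¹ - 1) * (14*x₀^13*a)) = -(2*x₀*a) := by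
      rw [hG0, ← Real.rpow_natCast x₀ 14, ← Real.rpow_mul hx₀.le,
        show ((14:ℕ):ℝ) * ((7:ℝ)⁻¹ - 1) = -((12:ℕ):ℝ) by push_cast; norm_num,
        Real.rpow_neg hx₀.le, Real.rpow_natCast]
      field_simp
      ring
    rw [← hval]
    exact h
  have hcont1 : Tendsto (fun t : ℝ => x₀ + a*t) (𝓝 0) (𝓝 x₀) := by
    simpa using hlin.continuousAt.tendsto
  have hcont2 : Tendsto G (𝓝 0) (𝓝 (x₀^14)) := by
    simpa [hG0] using hGD.continuousAt.tendsto
  have hev1 : ∀ᶠ t in 𝓝[>] (0:ℝ), 0 < x₀ + a*t :=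
    (hcont1.eventually (eventually_gt_nhds hx₀)).filter_mono nhdsWithin_le_nhds
  have hev2 : ∀ᶠ t in 𝓝[>] (0:ℝ), 0 < G t :=
    (hcont2.eventually (eventually_gt_nhds (by positivity))).filter_mono nhdsWithin_le_nhds
  have hmem : ∀ᶠ t in 𝓝[>] (0:ℝ), V (x₀ + a*t) (y t) (c*t) ∈ Af := by
    filter_upwards [hev1, hev2] with t h1 h2
    rw [mem_Af]
    have hy7 : (y t)^7 = -(G t) := by
      simp only [hy_def]
      rw [Odd.neg_pow ⟨3, by norm_num⟩, ← Real.rpow_natCast (G t ^ _) 7,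
        ← Real.rpow_mul h2.le]
      norm_num
    rw [hy7]
    simp only [hG_def]
    field_simp
    rw [mul_div_cancel_left₀ _ (show x₀ + t*a ≠ 0 by linarith)]
    ring
  refine curve_dir_coords ?_ (fun t => x₀ + a*t) y (fun t => c*t) hmem ?_ ?_ ?_
  · intro h0
    have : c = 0 := by rw [← V_apply2 a (-(2*x₀*a)) c, h0]; rfl
    exact hc this
  · exact coord_limit hlin (by norm_num)
  · exact coord_limit hyD hy0
  · exact coord_limit hct (mul_zero c)
lemma zero_mem_Af : (0 : EuclideanSpace ℝ (Fin 3)) ∈ Af := by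
  rw [← V_zero, mem_Af]; norm_num

lemma dir0_subset_GDir {u : EuclideanSpace ℝ (Fin 3)} (hu : u ∈ dirSet Af 0) :
    u ∈ GDir Af 0 :=
  ⟨hu.1, fun _ => 0, fun _ => zero_mem_Af, tendsto_const_nhds, fun _ => u, fun _ => hu,
    tendsto_const_nhds⟩

lemma tendsto_inv_nat : Tendsto (fun m : ℕ => ((m:ℝ)+1)⁻¹) atTop (𝓝 0) := by
  simpa [one_div] using tendsto_one_div_add_atTop_nhds_zero_nat (𝕜 := ℝ)

lemma GDirII {b c : ℝ} (hc : c ≠ 0) (hbc : b^2 + c^2 = 1) : V 0 b c ∈ GDir Af 0 := by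
  refine ⟨norm_V_unit (by rw [show (0:ℝ)^2 + b^2 + c^2 = b^2+c^2 by ring, hbc]),
    fun m => V 0 (((m:ℝ)+1)⁻¹) 0, ?_, ?_, fun _ => V 0 b c, ?_, tendsto_const_nhds⟩
  · intro m; rw [mem_Af]; norm_num
  · have h := tendsto_V (f := fun _ : ℕ => (0:ℝ)) (h := fun _ : ℕ => (0:ℝ))
      tendsto_const_nhds tendsto_inv_nat tendsto_const_nhds
    rwa [V_zero] at h
  · intro m; exact dirII (by positivity) hc hbc

lemma GDirIII {a c : ℝ} (hc : c ≠ 0) (hac : a^2 + c^2 = 1) : V a 0 c ∈ GDir Af 0 := by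
  have hunit : ‖V a 0 c‖ = 1 :=
    norm_V_unit (by rw [show a^2 + (0:ℝ)^2 + c^2 = a^2+c^2 by ring, hac])
  refine ⟨hunit, fun m => V (((m:ℝ)+1)⁻¹) (-(((m:ℝ)+1)⁻¹)^2) 0, ?_, ?_,
    fun m => ‖V a (-(2*(((m:ℝ)+1)⁻¹)*a)) c‖⁻¹ • V a (-(2*(((m:ℝ)+1)⁻¹)*a)) c, ?_, ?_⟩
  · intro m; rw [mem_Af]; ring_nf
  · have h := tendsto_V (g := fun m : ℕ => -((((m:ℝ)+1)⁻¹)^2)) (h := fun _ : ℕ => (0:ℝ))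
      tendsto_inv_nat (by simpa using ((tendsto_inv_nat.pow 2).neg)) tendsto_const_nhds
    rwa [V_zero] at h
  · intro m; exact dirIII (by positivity) hc
  · have hwlim : Tendsto (fun m : ℕ => V a (-(2*(((m:ℝ)+1)⁻¹)*a)) c) atTop (𝓝 (V a 0 c)) := by
      have h := tendsto_V (f := fun _ : ℕ => a) (h := fun _ : ℕ => c)
        tendsto_const_nhds (by simpa using ((tendsto_inv_nat.const_mul 2).mul_const a).neg)
        tendsto_const_nhds
      exact h
    have hne : V a 0 c ≠ 0 := by
      intro h0
      exact hc (by rw [← V_apply2 a 0 c, h0]; rfl)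
    have hcont : Tendsto (fun y : EuclideanSpace ℝ (Fin 3) => ‖y‖⁻¹ • y) (𝓝 (V a 0 c))
        (𝓝 (‖V a 0 c‖⁻¹ • V a 0 c)) :=
      Tendsto.smul ((continuous_norm.tendsto _).inv₀ (norm_ne_zero_iff.2 hne)) tendsto_id
    have h := hcont.comp hwlim
    rwa [hunit, inv_one, one_smul] at h

lemma dir0_coord2 {u : EuclideanSpace ℝ (Fin 3)} (hu : u ∈ dirSet Af 0) : u 2 = 0 := by
  obtain ⟨hn, x, hxA, hx0, hdir⟩ := hu
  have hcoord := tendsto_coord hdir 2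
  have hxnorm : Tendsto (fun i => ‖x i‖) atTop (𝓝 0) := by
    have := hx0.norm
    simpa using this
  have hzero : Tendsto (fun i => (‖x i - 0‖⁻¹ • (x i - 0)) 2) atTop (𝓝 0) := by
    rw [tendsto_zero_iff_abs_tendsto_zero]
    apply squeeze_zero' (Eventually.of_forall fun i => abs_nonneg _)
      (g := fun i => 2 * ‖x i‖ ^ ((3:ℝ)/5))
    · filter_upwards [hxnorm.eventually (eventually_lt_nhds zero_lt_one)] with i hi1
      have hxiA : x i ∈ Af := (hxA i).1
      have hpos : 0 < ‖x i‖ := norm_pos_iff.2 (hxA i).2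
      have happ : (‖x i - 0‖⁻¹ • (x i - 0)) 2 = ‖x i‖⁻¹ * (x i 2) := by
        simp [PiLp.smul_apply, PiLp.sub_apply]
      have heq : (x i 2)^5 = -((x i 1)^7 * (x i 0) + (x i 0)^15) := by
        have hm := hxiA
        simp only [Af, Set.mem_preimage, Set.mem_singleton_iff] at hm
        linarith
      have e0 := coord_le_norm (x i) 0
      have e1 := coord_le_norm (x i) 1
      have h1 : |x i 2|^5 ≤ 2 * ‖x i‖^8 := by
        rw [← abs_pow, heq, abs_neg]
        have hb : |(x i 1)^7 * (x i 0) + (x i 0)^15| ≤ |x i 1|^7 * |x i 0| + |x i 0|^15 := by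
          calc |(x i 1)^7 * (x i 0) + (x i 0)^15| ≤ |(x i 1)^7 * (x i 0)| + |(x i 0)^15| :=
                abs_add_le _ _
            _ = |x i 1|^7 * |x i 0| + |x i 0|^15 := by rw [abs_mul, abs_pow, abs_pow]
        have hc1 : |x i 1|^7 * |x i 0| ≤ ‖x i‖^7 * ‖x i‖ := by
          gcongr <;> first | exact abs_nonneg _ | exact coord_le_norm _ _
        have hc2 : |x i 0|^15 ≤ ‖x i‖^15 := by
          gcongr <;> first | exact abs_nonneg _ | exact coord_le_norm _ _
        have hc3 : ‖x i‖^15 ≤ ‖x i‖^8 :=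
          pow_le_pow_of_le_one (norm_nonneg _) hi1.le (by norm_num)
        have : ‖x i‖^7 * ‖x i‖ = ‖x i‖^8 := by ring
        linarith
      have hroot := root5_le (abs_nonneg (x i 2)) (norm_nonneg (x i)) h1
      rw [happ, abs_mul, abs_inv, abs_of_pos hpos]
      calc ‖x i‖⁻¹ * |x i 2| ≤ ‖x i‖⁻¹ * (2 * ‖x i‖ ^ ((3:ℝ)/5) * ‖x i‖) := by
            gcongr <;> first | exact inv_nonneg.2 hpos.le | exact hroot
        _ = 2 * ‖x i‖ ^ ((3:ℝ)/5) := by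
            rw [show ‖x i‖⁻¹ * (2 * ‖x i‖ ^ ((3:ℝ)/5) * ‖x i‖)
                = 2 * ‖x i‖ ^ ((3:ℝ)/5) * (‖x i‖ * ‖x i‖⁻¹) by ring,
              mul_inv_cancel₀ hpos.ne', mul_one]
    · have h2 := (rpow_tendsto_zero (show (0:ℝ) < 3/5 by norm_num) hxnorm).const_mul 2
      simpa using h2
  exact tendsto_nhds_unique hcoord hzero

lemma sumsq_of_norm_one {u : EuclideanSpace ℝ (Fin 3)} (h : ‖u‖ = 1) :
    u 0^2 + u 1^2 + u 2^2 = 1 := by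
  have hn : ‖u‖ = Real.sqrt (u 0^2 + u 1^2 + u 2^2) := by
    conv_lhs => rw [← V_eta u]
    rw [norm_V]
  rw [hn] at h
  have := Real.sqrt_eq_one.mp h
  exact this

lemma norm_smul_inv_unit {v : EuclideanSpace ℝ (Fin 3)} (hv : v ≠ 0) : ‖‖v‖⁻¹ • v‖ = 1 := by
  rw [norm_smul, norm_inv, norm_norm, inv_mul_cancel₀ (norm_ne_zero_iff.2 hv)]

lemma unit_mem_GDir {u : EuclideanSpace ℝ (Fin 3)} (hu : ‖u‖ = 1)
    (h : u 0 = 0 ∨ u 1 = 0 ∨ u 2 = 0) : u ∈ GDir Af 0 := by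
  have hsq := sumsq_of_norm_one hu
  by_cases hc : u 2 = 0
  · have heq : u = V (u 0) (u 1) 0 := by rw [← hc]; exact (V_eta u).symm
    rw [heq]
    exact dir0_subset_GDir (dirI (by rw [hc] at hsq; linarith))
  · rcases h with h0 | h1 | h2
    · have heq : u = V 0 (u 1) (u 2) := by rw [← h0]; exact (V_eta u).symm
      rw [heq]
      exact GDirII hc (by rw [h0] at hsq; linarith)
    · have heq : u = V (u 0) 0 (u 2) := by rw [← h1]; exact (V_eta u).symm
      rw [heq]
      exact GDirIII hc (by rw [h1] at hsq; linarith)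
    · exact absurd h2 hc

lemma planes_subset_LGDir (v : EuclideanSpace ℝ (Fin 3))
    (h : v 0 = 0 ∨ v 1 = 0 ∨ v 2 = 0) : v ∈ LGDir Af 0 := by
  by_cases hv : v = 0
  · refine ⟨V 1 0 0, dir0_subset_GDir (dirI (by norm_num)), 0, le_refl 0, ?_⟩
    rw [hv, zero_smul]
  · refine ⟨‖v‖⁻¹ • v, unit_mem_GDir (norm_smul_inv_unit hv) ?_, ‖v‖, norm_nonneg v, ?_⟩
    · rcases h with h|h|h
      · left; show ‖v‖⁻¹ * v 0 = 0; rw [h, mul_zero]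
      · right; left; show ‖v‖⁻¹ * v 1 = 0; rw [h, mul_zero]
      · right; right; show ‖v‖⁻¹ * v 2 = 0; rw [h, mul_zero]
    · rw [smul_smul, mul_inv_cancel₀ (norm_ne_zero_iff.2 hv), one_smul]

lemma LDir_eq_plane : LDir Af 0 = {v : EuclideanSpace ℝ (Fin 3) | v 2 = 0} := by
  ext v
  constructor
  · rintro ⟨a, ha, t, ht, rfl⟩
    show (t • a) 2 = 0
    have h2 := dir0_coord2 ha
    show t * a 2 = 0
    rw [h2, mul_zero]
  · intro hv
    have hv2 : v 2 = 0 := hv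
    by_cases h0 : v = 0
    · exact ⟨V 1 0 0, dirI (by norm_num), 0, le_refl 0, by rw [h0, zero_smul]⟩
    · refine ⟨‖v‖⁻¹ • v, ?_, ‖v‖, norm_nonneg v, ?_⟩
      · set u := ‖v‖⁻¹ • v with hu_def
        have hun : ‖u‖ = 1 := norm_smul_inv_unit h0
        have hu2 : u 2 = 0 := by
          show ‖v‖⁻¹ * v 2 = 0
          rw [hv2, mul_zero]
        have heq : u = V (u 0) (u 1) 0 := by rw [← hu2]; exact (V_eta u).symm
        rw [heq]
        have hsq := sumsq_of_norm_one hun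
        rw [hu2] at hsq
        exact dirI (by linarith)
      · rw [smul_smul, mul_inv_cancel₀ (norm_ne_zero_iff.2 h0), one_smul]


theorem stmt17 :
    ({v : EuclideanSpace ℝ (Fin 3) | v 0 = 0} ∪
     {v : EuclideanSpace ℝ (Fin 3) | v 1 = 0} ∪
     {v : EuclideanSpace ℝ (Fin 3) | v 2 = 0}
      ⊆ LGDir ((fun v : EuclideanSpace ℝ (Fin 3) =>
          v 2 ^ 5 + v 1 ^ 7 * v 0 + v 0 ^ 15) ⁻¹' {0}) 0) ∧
    ({v : EuclideanSpace ℝ (Fin 3) | v 2 = 0}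
      ⊂ LGDir ((fun v : EuclideanSpace ℝ (Fin 3) =>
          v 2 ^ 5 + v 1 ^ 7 * v 0 + v 0 ^ 15) ⁻¹' {0}) 0) ∧
    LDir ((fun v : EuclideanSpace ℝ (Fin 3) =>
        v 2 ^ 5 + v 1 ^ 7 * v 0 + v 0 ^ 15) ⁻¹' {0}) 0
      = {v : EuclideanSpace ℝ (Fin 3) | v 2 = 0} := by
  refine ⟨?_, ?_, LDir_eq_plane⟩
  · intro v hv
    rcases hv with (h | h) | h
    · exact planes_subset_LGDir v (Or.inl h)
    · exact planes_subset_LGDir v (Or.inr (Or.inl h))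
    · exact planes_subset_LGDir v (Or.inr (Or.inr h))
  · rw [ssubset_iff_subset_ne]
    constructor
    · intro v hv
      exact planes_subset_LGDir v (Or.inr (Or.inr hv))
    · intro hEq
      have hmem : V 0 0 1 ∈ LGDir Af 0 := planes_subset_LGDir _ (Or.inl rfl)
      rw [← hEq] at hmem
      have : (V 0 0 1) 2 = 0 := hmem
      norm_num at this
end
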